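/- arXiv:2308.06384 — 4 statements merged into one kernel-verified Lean document; each statement's English description precedes it below -/
import Mathlib

section
/- Let E be a complex Hilbert space, P a bounded operator on E with P = P* and P² = P, and u a unitary operator on E (u u* = u* u = 1). Assume that the commutator Pu − uP is a compact operator. Define F := PuP + (1 − P) and G := Pu*P + (1 − P). Then F∘G − 1 and G∘F − 1 are compact operators; in particular F is invertible modulo the compact operators. -/
open ContinuousLinearMap

lemma aux_mul_eq {E : Type*} [NormedAddCommGroup E] [InnerProductSpace ℂ E] [CompleteSpace E]
    (P u v : E →L[ℂ] E) (hPidem : P * P = P) (huv : u * v = 1) :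
    (P * u * P + (1 - P)) * (P * v * P + (1 - P)) - 1
      = P * ((u * P - P * u) * (v * P)) := by
  have h1 : P * u * P * (P * v * P) = P * u * P * v * P := by
    rw [show P * u * P * (P * v * P) = P * u * (P * P) * v * P from by noncomm_ring, hPidem]
  have h2 : P * u * P * (1 - P) = 0 := by
    rw [show P * u * P * (1 - P) = P * u * P - P * u * (P * P) from by noncomm_ring, hPidem,
      sub_self]
  have h3 : (1 - P) * (P * v * P) = 0 := by
    rw [show (1 - P) * (P * v * P) = P * v * P - P * P * v * P from by noncomm_ring, hPidem,
      sub_self]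
  have h4 : (1 - P) * (1 - P) = 1 - P := by
    rw [show (1 - P) * (1 - P) = 1 - P - P + P * P from by noncomm_ring, hPidem]; abel
  have h5 : P * (P * u * (v * P)) = P := by
    rw [show P * (P * u * (v * P)) = P * P * (u * v) * P from by noncomm_ring, hPidem, huv,
      mul_one, hPidem]
  have expand : (P * u * P + (1 - P)) * (P * v * P + (1 - P))
      = P * u * P * (P * v * P) + P * u * P * (1 - P) + (1 - P) * (P * v * P)
        + (1 - P) * (1 - P) := by noncomm_ring
  rw [expand, h1, h2, h3, h4,
    show P * ((u * P - P * u) * (v * P)) = P * (u * P * (v * P)) - P * (P * u * (v * P)) from by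
      noncomm_ring, h5]
  noncomm_ring

/-- If `P` is a self-adjoint idempotent bounded operator on a complex Hilbert
space `E`, `u` is a unitary bounded operator, and the commutator `Pu - uP` is compact, then
with `F := PuP + (1 - P)` and `G := Pu*P + (1 - P)`, both `F∘G - 1` and `G∘F - 1` are
compact; in particular `F` is invertible modulo the compact operators. -/
theorem truncated_unitary_invertible_mod_compacts
    {E : Type*} [NormedAddCommGroup E] [InnerProductSpace ℂ E] [CompleteSpace E]
    (P u F G : E →L[ℂ] E)
    (hPsa : adjoint P = P) (hPidem : P ∘L P = P)
    (hu1 : u ∘L adjoint u = 1) (hu2 : adjoint u ∘L u = 1)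
    (hcomm : IsCompactOperator ⇑(P ∘L u - u ∘L P))
    (hF : F = P ∘L u ∘L P + (1 - P))
    (hG : G = P ∘L adjoint u ∘L P + (1 - P)) :
    IsCompactOperator ⇑(F ∘L G - 1) ∧ IsCompactOperator ⇑(G ∘L F - 1) := by
  set v := adjoint u with hv
  have hPidem' : P * P = P := hPidem
  have hu1' : u * v = 1 := hu1
  have hu2' : v * u = 1 := hu2
  -- commutator with v is compact too
  have hcomm2 : IsCompactOperator ⇑(u ∘L P - P ∘L u) := by
    have := hcomm.neg
    simpa [Function.comp] using this
  have hcommv : IsCompactOperator ⇑(v ∘L P - P ∘L v) := by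
    have key : v ∘L P - P ∘L v = v ∘L ((P ∘L u - u ∘L P) ∘L v) := by
      have : v * P - P * v = v * ((P * u - u * P) * v) := by
        rw [show v * ((P * u - u * P) * v) = v * P * (u * v) - v * u * (P * v) from by
          noncomm_ring, hu1', hu2', mul_one, one_mul]
      exact this
    rw [key]
    have h1 : IsCompactOperator (⇑(P ∘L u - u ∘L P) ∘ ⇑v) := hcomm.comp_clm v
    have h2 : IsCompactOperator (⇑v ∘ (⇑(P ∘L u - u ∘L P) ∘ ⇑v)) := h1.clm_comp v
    simpa only [coe_comp, Function.comp_assoc] using h2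
  have hFG : F ∘L G - 1 = P ∘L ((u ∘L P - P ∘L u) ∘L (v ∘L P)) := by
    have : F * G - 1 = P * ((u * P - P * u) * (v * P)) := by
      rw [hF, hG]
      exact aux_mul_eq P u v hPidem' hu1'
    exact this
  have hGF : G ∘L F - 1 = P ∘L ((v ∘L P - P ∘L v) ∘L (u ∘L P)) := by
    have : G * F - 1 = P * ((v * P - P * v) * (u * P)) := by
      rw [hF, hG]
      exact aux_mul_eq P v u hPidem' hu2'
    exact this
  constructor
  · rw [hFG]
    have h1 : IsCompactOperator (⇑(u ∘L P - P ∘L u) ∘ ⇑(v ∘L P)) := hcomm2.comp_clm _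
    have h2 := h1.clm_comp P
    simpa only [coe_comp, Function.comp_assoc] using h2
  · rw [hGF]
    have h1 : IsCompactOperator (⇑(v ∘L P - P ∘L v) ∘ ⇑(u ∘L P)) := hcommv.comp_clm _
    have h2 := h1.clm_comp P
    simpa only [coe_comp, Function.comp_assoc] using h2
end

section
/- Let ι be an index set, W ⊆ ι, P := P_W, let H be a bounded self-adjoint operator on ℓ²(ι) such that [P, H] can be written as a composition A∘B of two Hilbert–Schmidt operators, and let f : ℝ → ℂ be a Schwartz function with derivative f'. Then the families i ↦ ⟪e_i, [P, f(H)](e_i)⟫ and i ↦ ⟪e_i, (f'(H)∘[P, H])(e_i)⟫ are both summable, and their sums coincide: Tr([P, f(H)]) = Tr(f'(H)·[P, H]). -/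
open scoped InnerProductSpace ComplexConjugate
open ContinuousLinearMap

namespace TraceCommAux

variable {ι : Type*} [DecidableEq ι]

local notation "E" => lp (fun _ : ι => ℂ) 2

noncomputable def e (i : ι) : lp (fun _ : ι => ℂ) 2 := lp.single 2 i (1 : ℂ)

lemma inner_e_left (i : ι) (x : E) : ⟪e i, x⟫_ℂ = x i := by
  rw [e, lp.inner_single_left]
  simp [RCLike.inner_apply]

lemma hasSum_norm_sq (x : E) : HasSum (fun i : ι => ‖x i‖ ^ 2) (‖x‖ ^ 2) := by
  have h := lp.hasSum_norm (p := 2) (by norm_num) x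
  simpa [Real.rpow_natCast] using h

lemma adj_e_apply (S : E →L[ℂ] E) (i j : ι) :
    (adjoint S (e i)) j = conj ((S (e j)) i) := by
  rw [← inner_e_left, adjoint_inner_right, ← inner_conj_symm, inner_e_left]

/-- Hilbert–Schmidt predicate via the standard basis. -/
def HS (S : E →L[ℂ] E) : Prop := Summable fun j : ι => ‖S (e j)‖ ^ 2

lemma hs_prod {S : E →L[ℂ] E} (hS : HS S) :
    Summable fun p : ι × ι => ‖(S (e p.2)) p.1‖ ^ 2 := by
  have h : Summable fun p : ι × ι => ‖(S (e p.1)) p.2‖ ^ 2 := by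
    refine (summable_prod_of_nonneg ?_).2 ⟨fun j => (hasSum_norm_sq (S (e j))).summable, ?_⟩
    · intro p; positivity
    · refine hS.congr fun j => ?_
      exact ((hasSum_norm_sq (S (e j))).tsum_eq).symm
  exact h.prod_symm

lemma HS.tsum_prod_eq {S : E →L[ℂ] E} (hS : HS S) :
    ∑' j : ι, ‖S (e j)‖ ^ 2 = ∑' p : ι × ι, ‖(S (e p.2)) p.1‖ ^ 2 := by
  have h1 : (∑' j : ι, ‖S (e j)‖ ^ 2) = ∑' (j : ι) (i : ι), ‖(S (e j)) i‖ ^ 2 :=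
    tsum_congr fun j => ((hasSum_norm_sq (S (e j))).tsum_eq).symm
  have h3 := (Equiv.prodComm ι ι).tsum_eq (fun p : ι × ι => ‖(S (e p.2)) p.1‖ ^ 2)
  rw [h1]
  exact (Summable.tsum_prod' (f := fun p : ι × ι => ‖(S (e p.1)) p.2‖ ^ 2) (hs_prod hS).prod_symm
    (fun j => (hasSum_norm_sq (S (e j))).summable)).symm.trans h3


lemma norm_adj_e_sq (S : E →L[ℂ] E) (i : ι) :
    ‖adjoint S (e i)‖ ^ 2 = ∑' j : ι, ‖(S (e j)) i‖ ^ 2 := by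
  rw [← (hasSum_norm_sq (adjoint S (e i))).tsum_eq]
  exact tsum_congr fun j => by rw [adj_e_apply, RCLike.norm_conj]

lemma HS.adj {S : E →L[ℂ] E} (hS : HS S) : HS (adjoint S) := by
  have h := (summable_prod_of_nonneg (f := fun p : ι × ι => ‖(S (e p.2)) p.1‖ ^ 2)
      (fun p => by positivity)).1 (hs_prod hS)
  exact h.2.congr fun i => (norm_adj_e_sq S i).symm

lemma HS.adj_tsum_eq {S : E →L[ℂ] E} (hS : HS S) :
    ∑' i : ι, ‖adjoint S (e i)‖ ^ 2 = ∑' j : ι, ‖S (e j)‖ ^ 2 := by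
  have h := (summable_prod_of_nonneg (f := fun p : ι × ι => ‖(S (e p.2)) p.1‖ ^ 2)
      (fun p => by positivity)).1 (hs_prod hS)
  calc ∑' i : ι, ‖adjoint S (e i)‖ ^ 2 = ∑' (i : ι) (j : ι), ‖(S (e j)) i‖ ^ 2 :=
        tsum_congr (norm_adj_e_sq S)
    _ = ∑' p : ι × ι, ‖(S (e p.2)) p.1‖ ^ 2 := (Summable.tsum_prod' (hs_prod hS) h.1).symm
    _ = ∑' j : ι, ‖S (e j)‖ ^ 2 := (HS.tsum_prod_eq hS).symm

lemma HS.lcomp {S : E →L[ℂ] E} (hS : HS S) (T : E →L[ℂ] E) : HS (T * S) := by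
  refine Summable.of_nonneg_of_le (fun j => by positivity) (fun j => ?_) (hS.mul_left (‖T‖ ^ 2))
  rw [mul_apply_eq_comp, ← mul_pow]
  exact pow_le_pow_left₀ (norm_nonneg _) (T.le_opNorm (S (e j))) 2

lemma HS.lcomp_tsum_le {S : E →L[ℂ] E} (hS : HS S) (T : E →L[ℂ] E) :
    ∑' j : ι, ‖(T * S) (e j)‖ ^ 2 ≤ ‖T‖ ^ 2 * ∑' j : ι, ‖S (e j)‖ ^ 2 := by
  rw [← tsum_mul_left]
  refine Summable.tsum_le_tsum (fun j => ?_) (hS.lcomp T) (hS.mul_left (‖T‖ ^ 2))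
  rw [mul_apply_eq_comp, ← mul_pow]
  exact pow_le_pow_left₀ (norm_nonneg _) (T.le_opNorm (S (e j))) 2

lemma HS.rcomp {S : E →L[ℂ] E} (hS : HS S) (T : E →L[ℂ] E) : HS (S * T) := by
  have h := ((hS.adj.lcomp (adjoint T)).adj)
  have : adjoint (adjoint T * adjoint S) = S * T := by
    simp [mul_def, adjoint_comp]
  rwa [this] at h


lemma mul_prod_summable {S R : E →L[ℂ] E} (hS : HS S) (hR : HS R) :
    Summable fun p : ι × ι => (S (e p.2)) p.1 * (R (e p.1)) p.2 := by
  refine Summable.of_norm_bounded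
    (g := fun p : ι × ι => (‖(S (e p.2)) p.1‖ ^ 2 + ‖(R (e p.1)) p.2‖ ^ 2) / 2)
    (((hs_prod hS).add (hs_prod hR).prod_symm).div_const 2) (fun p => ?_)
  rw [norm_mul]
  nlinarith [sq_nonneg (‖(S (e p.2)) p.1‖ - ‖(R (e p.1)) p.2‖), norm_nonneg ((S (e p.2)) p.1),
    norm_nonneg ((R (e p.1)) p.2)]

lemma diag_formula (S R : E →L[ℂ] E) (i : ι) :
    ⟪e i, (S * R) (e i)⟫_ℂ = ∑' j : ι, (S (e j)) i * (R (e i)) j := by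
  rw [mul_apply_eq_comp, ← adjoint_inner_left, lp.inner_eq_tsum]
  exact tsum_congr fun j => by
    rw [RCLike.inner_apply, adj_e_apply, Complex.conj_conj, mul_comm]

lemma trSummable {S R : E →L[ℂ] E} (hS : HS S) (hR : HS R) :
    Summable fun i : ι => ⟪e i, (S * R) (e i)⟫_ℂ := by
  refine Summable.of_norm_bounded
    (g := fun i : ι => (‖adjoint S (e i)‖ ^ 2 + ‖R (e i)‖ ^ 2) / 2)
    ((hS.adj.add hR).div_const 2) (fun i => ?_)
  rw [mul_apply_eq_comp, ← adjoint_inner_left]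
  refine le_trans (norm_inner_le_norm _ _) ?_
  nlinarith [sq_nonneg (‖adjoint S (e i)‖ - ‖R (e i)‖), norm_nonneg (adjoint S (e i)),
    norm_nonneg (R (e i))]

lemma trComm {S R : E →L[ℂ] E} (hS : HS S) (hR : HS R) :
    ∑' i : ι, ⟪e i, (S * R) (e i)⟫_ℂ = ∑' j : ι, ⟪e j, (R * S) (e j)⟫_ℂ := by
  have hF := mul_prod_summable hS hR
  have hG := mul_prod_summable hR hS
  calc ∑' i : ι, ⟪e i, (S * R) (e i)⟫_ℂ
      = ∑' (i : ι) (j : ι), (S (e j)) i * (R (e i)) j := tsum_congr (diag_formula S R)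
    _ = ∑' p : ι × ι, (S (e p.2)) p.1 * (R (e p.1)) p.2 :=
        (Summable.tsum_prod' hF (fun i => hF.prod_factor i)).symm
    _ = ∑' p : ι × ι, (S (e p.1)) p.2 * (R (e p.2)) p.1 := by
        simpa using ((Equiv.prodComm ι ι).tsum_eq
          (fun p : ι × ι => (S (e p.2)) p.1 * (R (e p.1)) p.2)).symm
    _ = ∑' (j : ι) (i : ι), (S (e j)) i * (R (e i)) j := by
        simpa using Summable.tsum_prod' hF.prod_symm (fun j => hF.prod_symm.prod_factor j)
    _ = ∑' j : ι, ⟪e j, (R * S) (e j)⟫_ℂ := by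
        refine tsum_congr fun j => ?_
        rw [diag_formula R S j]
        exact tsum_congr fun i => mul_comm _ _

lemma comm_pow_expand {R : Type*} [Ring R] (p h : R) (n : ℕ) :
    p * h ^ (n + 1) - h ^ (n + 1) * p
      = ∑ k ∈ Finset.range (n + 1), h ^ k * (p * h - h * p) * h ^ (n - k) := by
  induction n with
  | zero => simp
  | succ n ih =>
    have key : ∑ k ∈ Finset.range (n + 2), h ^ k * (p * h - h * p) * h ^ (n + 1 - k)
        = (∑ k ∈ Finset.range (n + 1), h ^ k * (p * h - h * p) * h ^ (n - k)) * h
          + h ^ (n + 1) * (p * h - h * p) := by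
      rw [Finset.sum_range_succ, Finset.sum_mul]
      congr 1
      · refine Finset.sum_congr rfl fun k hk => ?_
        have hk' : k ≤ n := Nat.lt_succ_iff.mp (Finset.mem_range.mp hk)
        rw [Nat.succ_sub hk', pow_succ, ← mul_assoc]
      · simp
    rw [key, ← ih, pow_succ]
    noncomm_ring

lemma diag_commutator_eq_zero (Pop T : E →L[ℂ] E) (W : Set ι)
    (hP : ∀ (x : lp (fun _ : ι => ℂ) 2) (i : ι), (Pop x) i = W.indicator (⇑x) i) (i : ι) :
    ⟪e i, (Pop * T - T * Pop) (e i)⟫_ℂ = 0 := by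
  classical
  set c : ℂ := W.indicator (fun _ => (1 : ℂ)) i with hc
  have hPe : Pop (e i) = c • e i := by
    apply lp.ext; funext j
    have h1 : (Pop (e i)) j = W.indicator (⇑(e i)) j := hP (e i) j
    have h2 : ((c • e i : lp (fun _ : ι => ℂ) 2)) j = c * (e i) j := by
      rw [lp.coeFn_smul]; rfl
    rw [h1, h2]
    by_cases hj : j = i
    · subst hj
      by_cases hW : j ∈ W <;>
        simp [Set.indicator_apply, hW, hc, e, lp.single_apply_self]
    · have : (e i) j = 0 := lp.single_apply_ne 2 i _ hj
      simp [Set.indicator_apply, this]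
  have hL : ⟪e i, (Pop * T) (e i)⟫_ℂ = c * (T (e i)) i := by
    rw [mul_apply_eq_comp, inner_e_left, hP]
    by_cases hW : i ∈ W <;> simp [Set.indicator_apply, hW, hc]
  have hR : ⟪e i, (T * Pop) (e i)⟫_ℂ = c * (T (e i)) i := by
    rw [mul_apply_eq_comp, hPe, map_smul, inner_smul_right, inner_e_left]
  rw [sub_apply, inner_sub_right, hL, hR, sub_self]


set_option maxHeartbeats 1000000 in
lemma tMono {W : Set ι}
    {H Pop A B : lp (fun _ : ι => ℂ) 2 →L[ℂ] lp (fun _ : ι => ℂ) 2}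
    (hP : ∀ (x : lp (fun _ : ι => ℂ) 2) (i : ι), (Pop x) i = W.indicator (⇑x) i)
    (hA : HS A) (hB : HS B)
    (hAB : Pop * H - H * Pop = A * B) (n : ℕ) :
    ∑' i : ι, ⟪e i, (H ^ n * (A * B)) (e i)⟫_ℂ = 0 := by
  classical
  have hXfact : ∀ k : ℕ, H ^ k * (A * B) * H ^ (n - k) = (H ^ k * A) * (B * H ^ (n - k)) := by
    intro k
    rw [mul_assoc, mul_assoc, ← mul_assoc (H ^ k)]
  have hXsum : ∀ k : ℕ, Summable fun i : ι => ⟪e i, (H ^ k * (A * B) * H ^ (n - k)) (e i)⟫_ℂ := by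
    intro k
    rw [hXfact]
    exact trSummable (hA.lcomp _) (hB.rcomp _)
  have hexp : Pop * H ^ (n + 1) - H ^ (n + 1) * Pop
      = ∑ k ∈ Finset.range (n + 1), H ^ k * (A * B) * H ^ (n - k) := by
    rw [comm_pow_expand]
    exact Finset.sum_congr rfl fun k _ => by rw [hAB]
  have h0 : ∑ k ∈ Finset.range (n + 1),
      ∑' i : ι, ⟪e i, (H ^ k * (A * B) * H ^ (n - k)) (e i)⟫_ℂ = 0 := by
    rw [← Summable.tsum_finsetSum (fun k _ => hXsum k)]
    have hz : ∀ i : ι, ∑ k ∈ Finset.range (n + 1),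
        ⟪e i, (H ^ k * (A * B) * H ^ (n - k)) (e i)⟫_ℂ = 0 := by
      intro i
      have h1 : ∑ k ∈ Finset.range (n + 1), ⟪e i, (H ^ k * (A * B) * H ^ (n - k)) (e i)⟫_ℂ
          = ⟪e i, (∑ k ∈ Finset.range (n + 1), H ^ k * (A * B) * H ^ (n - k)) (e i)⟫_ℂ := by
        simp only [ContinuousLinearMap.sum_apply, inner_sum]
      rw [h1, ← hexp, diag_commutator_eq_zero Pop (H ^ (n + 1)) W hP i]
    calc ∑' i : ι, ∑ k ∈ Finset.range (n + 1),
          ⟪e i, (H ^ k * (A * B) * H ^ (n - k)) (e i)⟫_ℂ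
        = ∑' i : ι, (0 : ℂ) := tsum_congr hz
      _ = 0 := tsum_zero
  have hterm : ∀ k ∈ Finset.range (n + 1),
      ∑' i : ι, ⟪e i, (H ^ k * (A * B) * H ^ (n - k)) (e i)⟫_ℂ
        = ∑' i : ι, ⟪e i, (H ^ n * (A * B)) (e i)⟫_ℂ := by
    intro k hk
    have hk' : k ≤ n := Nat.lt_succ_iff.mp (Finset.mem_range.mp hk)
    have e2 : (B * H ^ (n - k)) * (H ^ k * A) = B * (H ^ n * A) := by
      rw [mul_assoc, ← mul_assoc (H ^ (n - k)), ← pow_add, Nat.sub_add_cancel hk']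
    have e4 : (H ^ n * A) * B = H ^ n * (A * B) := by rw [mul_assoc]
    calc ∑' i : ι, ⟪e i, (H ^ k * (A * B) * H ^ (n - k)) (e i)⟫_ℂ
        = ∑' i : ι, ⟪e i, ((H ^ k * A) * (B * H ^ (n - k))) (e i)⟫_ℂ := by rw [hXfact]
      _ = ∑' i : ι, ⟪e i, ((B * H ^ (n - k)) * (H ^ k * A)) (e i)⟫_ℂ :=
          trComm (hA.lcomp _) (hB.rcomp _)
      _ = ∑' i : ι, ⟪e i, ((B * (H ^ n * A))) (e i)⟫_ℂ := by rw [e2]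
      _ = ∑' i : ι, ⟪e i, ((H ^ n * A) * B) (e i)⟫_ℂ := trComm hB (hA.lcomp _)
      _ = ∑' i : ι, ⟪e i, (H ^ n * (A * B)) (e i)⟫_ℂ := by rw [e4]
  rw [Finset.sum_congr rfl hterm, Finset.sum_const, Finset.card_range, nsmul_eq_mul] at h0
  have hne : ((n : ℂ) + 1) ≠ 0 := Nat.cast_add_one_ne_zero n
  have h0' : ((n : ℂ) + 1) * ∑' i : ι, ⟪e i, (H ^ n * (A * B)) (e i)⟫_ℂ = 0 := by
    exact_mod_cast h0
  exact (mul_eq_zero.mp h0').resolve_left hne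


lemma tSummable {A B : lp (fun _ : ι => ℂ) 2 →L[ℂ] lp (fun _ : ι => ℂ) 2}
    (hA : HS A) (hB : HS B) (T : lp (fun _ : ι => ℂ) 2 →L[ℂ] lp (fun _ : ι => ℂ) 2) :
    Summable fun i : ι => ⟪e i, (T * (A * B)) (e i)⟫_ℂ := by
  have h : T * (A * B) = (T * A) * B := (mul_assoc _ _ _).symm
  rw [h]
  exact trSummable (hA.lcomp T) hB

set_option maxHeartbeats 1000000 in
lemma tPoly {W : Set ι}
    {H Pop A B : lp (fun _ : ι => ℂ) 2 →L[ℂ] lp (fun _ : ι => ℂ) 2}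
    (hP : ∀ (x : lp (fun _ : ι => ℂ) 2) (i : ι), (Pop x) i = W.indicator (⇑x) i)
    (hA : HS A) (hB : HS B)
    (hAB : Pop * H - H * Pop = A * B) (q : Polynomial ℂ) :
    ∑' i : ι, ⟪e i, ((Polynomial.aeval H q) * (A * B)) (e i)⟫_ℂ = 0 := by
  classical
  have hop : (Polynomial.aeval H q) * (A * B)
      = ∑ k ∈ Finset.range (q.natDegree + 1), q.coeff k • (H ^ k * (A * B)) := by
    rw [Polynomial.aeval_eq_sum_range, Finset.sum_mul]
    exact Finset.sum_congr rfl fun k _ => smul_mul_assoc _ _ _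
  rw [hop]
  have hdiag : ∀ i : ι,
      ⟪e i, (∑ k ∈ Finset.range (q.natDegree + 1), q.coeff k • (H ^ k * (A * B))) (e i)⟫_ℂ
        = ∑ k ∈ Finset.range (q.natDegree + 1),
            q.coeff k * ⟪e i, (H ^ k * (A * B)) (e i)⟫_ℂ := by
    intro i
    rw [ContinuousLinearMap.sum_apply, inner_sum]
    exact Finset.sum_congr rfl fun k _ => by
      rw [ContinuousLinearMap.smul_apply, inner_smul_right]
  calc ∑' i : ι, ⟪e i, (∑ k ∈ Finset.range (q.natDegree + 1),
          q.coeff k • (H ^ k * (A * B))) (e i)⟫_ℂ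
      = ∑' i : ι, ∑ k ∈ Finset.range (q.natDegree + 1),
          q.coeff k * ⟪e i, (H ^ k * (A * B)) (e i)⟫_ℂ := tsum_congr hdiag
    _ = ∑ k ∈ Finset.range (q.natDegree + 1),
          ∑' i : ι, q.coeff k * ⟪e i, (H ^ k * (A * B)) (e i)⟫_ℂ :=
        Summable.tsum_finsetSum (fun k _ => (tSummable hA hB (H ^ k)).mul_left _)
    _ = 0 := by
      refine Finset.sum_eq_zero fun k _ => ?_
      rw [tsum_mul_left, tMono hP hA hB hAB k, mul_zero]

set_option maxHeartbeats 1000000 in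
lemma tBound {A B D : lp (fun _ : ι => ℂ) 2 →L[ℂ] lp (fun _ : ι => ℂ) 2}
    (hA : HS A) (hB : HS B) {ε : ℝ} (hε : 0 < ε) (hD : ‖D‖ ≤ ε) :
    ‖∑' i : ι, ⟪e i, (D * (A * B)) (e i)⟫_ℂ‖
      ≤ ε * ((∑' j : ι, ‖A (e j)‖ ^ 2) + ∑' j : ι, ‖B (e j)‖ ^ 2) / 2 := by
  have hassoc : D * (A * B) = (D * A) * B := (mul_assoc _ _ _).symm
  rw [hassoc]
  have hSA : HS (D * A) := hA.lcomp D
  have hmaj : ∀ i : ι, ‖⟪e i, ((D * A) * B) (e i)⟫_ℂ‖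
      ≤ ε⁻¹ / 2 * ‖adjoint (D * A) (e i)‖ ^ 2 + ε / 2 * ‖B (e i)‖ ^ 2 := by
    intro i
    rw [mul_apply_eq_comp, ← adjoint_inner_left]
    refine le_trans (norm_inner_le_norm _ _) ?_
    have h1 : (0:ℝ) ≤ ‖adjoint (D * A) (e i)‖ := norm_nonneg _
    have h2 : (0:ℝ) ≤ ‖B (e i)‖ := norm_nonneg _
    have h3 : ε⁻¹ * ε = 1 := inv_mul_cancel₀ hε.ne'
    nlinarith [mul_nonneg (inv_nonneg.mpr hε.le)
      (sq_nonneg (‖adjoint (D * A) (e i)‖ - ε * ‖B (e i)‖)), inv_pos.mpr hε]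
  have hmajsum : Summable fun i : ι =>
      ε⁻¹ / 2 * ‖adjoint (D * A) (e i)‖ ^ 2 + ε / 2 * ‖B (e i)‖ ^ 2 :=
    (hSA.adj.mul_left _).add (hB.mul_left _)
  have hnormsum : Summable fun i : ι => ‖⟪e i, ((D * A) * B) (e i)⟫_ℂ‖ :=
    Summable.of_nonneg_of_le (fun i => norm_nonneg _) hmaj hmajsum
  calc ‖∑' i : ι, ⟪e i, ((D * A) * B) (e i)⟫_ℂ‖
      ≤ ∑' i : ι, ‖⟪e i, ((D * A) * B) (e i)⟫_ℂ‖ := norm_tsum_le_tsum_norm hnormsum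
    _ ≤ ∑' i : ι, (ε⁻¹ / 2 * ‖adjoint (D * A) (e i)‖ ^ 2 + ε / 2 * ‖B (e i)‖ ^ 2) :=
        Summable.tsum_le_tsum hmaj hnormsum hmajsum
    _ = ε⁻¹ / 2 * (∑' i : ι, ‖adjoint (D * A) (e i)‖ ^ 2)
          + ε / 2 * ∑' i : ι, ‖B (e i)‖ ^ 2 := by
        rw [Summable.tsum_add ((hSA.adj).mul_left _) (hB.mul_left _), tsum_mul_left, tsum_mul_left]
    _ ≤ ε⁻¹ / 2 * (ε ^ 2 * ∑' j : ι, ‖A (e j)‖ ^ 2) + ε / 2 * ∑' i : ι, ‖B (e i)‖ ^ 2 := by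
        have h1 : ∑' i : ι, ‖adjoint (D * A) (e i)‖ ^ 2 = ∑' j : ι, ‖(D * A) (e j)‖ ^ 2 :=
          hSA.adj_tsum_eq
        have h2 : ∑' j : ι, ‖(D * A) (e j)‖ ^ 2 ≤ ‖D‖ ^ 2 * ∑' j : ι, ‖A (e j)‖ ^ 2 :=
          hA.lcomp_tsum_le D
        have h3 : ‖D‖ ^ 2 * ∑' j : ι, ‖A (e j)‖ ^ 2 ≤ ε ^ 2 * ∑' j : ι, ‖A (e j)‖ ^ 2 := by
          have : ‖D‖ ^ 2 ≤ ε ^ 2 := by nlinarith [norm_nonneg D]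
          exact mul_le_mul_of_nonneg_right this (tsum_nonneg fun j => by positivity)
        have := (h1.trans_le h2).trans h3
        nlinarith [inv_pos.mpr hε]
    _ = ε * ((∑' j : ι, ‖A (e j)‖ ^ 2) + ∑' j : ι, ‖B (e j)‖ ^ 2) / 2 := by
        field_simp
  

set_option maxHeartbeats 1000000 in
set_option synthInstance.maxHeartbeats 1000000 in
lemma poly_approx {H : lp (fun _ : ι => ℂ) 2 →L[ℂ] lp (fun _ : ι => ℂ) 2}
    (hH : IsSelfAdjoint H) (g : ℝ → ℂ) (hg : Continuous g) {ε : ℝ} (hε : 0 < ε) :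
    ∃ q : Polynomial ℂ, ‖cfc (fun z : ℂ => g z.re) H - Polynomial.aeval H q‖ ≤ ε := by
  have hnormal : IsStarNormal H := hH.isStarNormal
  set M : ℝ := ‖H‖ * ‖(1 : lp (fun _ : ι => ℂ) 2 →L[ℂ] lp (fun _ : ι => ℂ) 2)‖ with hM
  have hM0 : 0 ≤ M := mul_nonneg (norm_nonneg _) (norm_nonneg _)
  obtain ⟨p₁, hp₁⟩ := exists_polynomial_near_of_continuousOn (-M) M (fun x => (g x).re)
    (Continuous.continuousOn (by fun_prop)) (ε / 2) (by positivity)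
  obtain ⟨p₂, hp₂⟩ := exists_polynomial_near_of_continuousOn (-M) M (fun x => (g x).im)
    (Continuous.continuousOn (by fun_prop)) (ε / 2) (by positivity)
  set q : Polynomial ℂ :=
    p₁.map (algebraMap ℝ ℂ) + Polynomial.C Complex.I * p₂.map (algebraMap ℝ ℂ) with hqdef
  refine ⟨q, ?_⟩
  have hgc : Continuous fun z : ℂ => g z.re := hg.comp Complex.continuous_re
  rw [← cfc_polynomial q H, ← cfc_sub (fun z : ℂ => g z.re) (fun z : ℂ => q.eval z) H
    (Continuous.continuousOn (by fun_prop)) (Continuous.continuousOn (by fun_prop))]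
  refine norm_cfc_le hε.le fun z hz => ?_
  have hz2 : z = ((z.re : ℝ) : ℂ) := hH.mem_spectrum_eq_re hz
  have hz3 : |z.re| ≤ M := by
    have ha := spectrum.norm_le_norm_mul_of_mem hz
    have hb := Complex.abs_re_le_norm z
    exact hb.trans ha
  have hx : z.re ∈ Set.Icc (-M) M := by
    rcases abs_le.mp hz3 with ⟨h1', h2'⟩
    exact Set.mem_Icc.mpr ⟨h1', h2'⟩
  have hmap : ∀ p : Polynomial ℝ, (p.map (algebraMap ℝ ℂ)).eval ((z.re : ℝ) : ℂ)
      = ((p.eval z.re : ℝ) : ℂ) := by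
    intro p
    rw [Polynomial.eval_map, ← Polynomial.aeval_def, ← Complex.coe_algebraMap,
      Polynomial.aeval_algebraMap_apply_eq_algebraMap_eval]
  have hqe : q.eval z = ((p₁.eval z.re : ℝ) : ℂ) + Complex.I * ((p₂.eval z.re : ℝ) : ℂ) := by
    conv_lhs => rw [hz2]
    simp only [hqdef, Polynomial.eval_add, Polynomial.eval_mul, Polynomial.eval_C]
    rw [hmap, hmap]
  rw [hqe]
  have hre := hp₁ z.re hx
  have him := hp₂ z.re hx
  have hzz : g z.re - (((p₁.eval z.re : ℝ) : ℂ) + Complex.I * ((p₂.eval z.re : ℝ) : ℂ))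
      = (((g z.re).re - p₁.eval z.re : ℝ) : ℂ)
        + (((g z.re).im - p₂.eval z.re : ℝ) : ℂ) * Complex.I := by
    simp only [Complex.ext_iff, Complex.sub_re, Complex.add_re, Complex.ofReal_re,
      Complex.mul_re, Complex.I_re, Complex.I_im, Complex.ofReal_im, Complex.sub_im,
      Complex.add_im, Complex.mul_im]
    constructor <;> ring
  rw [hzz]
  refine le_trans (norm_add_le _ _) ?_
  rw [norm_mul, Complex.norm_I, mul_one, Complex.norm_real, Complex.norm_real]
  rw [Real.norm_eq_abs, Real.norm_eq_abs, abs_sub_comm ((g z.re).re) _,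
    abs_sub_comm ((g z.re).im) _]
  linarith

set_option maxHeartbeats 1000000 in
lemma trace_cfc_zero {W : Set ι}
    {H Pop A B : lp (fun _ : ι => ℂ) 2 →L[ℂ] lp (fun _ : ι => ℂ) 2}
    (hH : IsSelfAdjoint H)
    (hP : ∀ (x : lp (fun _ : ι => ℂ) 2) (i : ι), (Pop x) i = W.indicator (⇑x) i)
    (hA : HS A) (hB : HS B)
    (hAB : Pop * H - H * Pop = A * B)
    (g : ℝ → ℂ) (hg : Continuous g) :
    ∑' i : ι, ⟪e i, ((cfc (fun z : ℂ => g z.re) H) * (A * B)) (e i)⟫_ℂ = 0 := by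
  set cA := ∑' j : ι, ‖A (e j)‖ ^ 2 with hcA
  set cB := ∑' j : ι, ‖B (e j)‖ ^ 2 with hcB
  have hcA0 : 0 ≤ cA := tsum_nonneg fun j => by positivity
  have hcB0 : 0 ≤ cB := tsum_nonneg fun j => by positivity
  set t := ∑' i : ι, ⟪e i, ((cfc (fun z : ℂ => g z.re) H) * (A * B)) (e i)⟫_ℂ with ht
  have key : ∀ ε : ℝ, 0 < ε → ‖t‖ ≤ ε * (cA + cB) / 2 := by
    intro ε hε
    obtain ⟨q, hq⟩ := poly_approx (ι := ι) hH g hg hε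
    have hsplit : t = (∑' i : ι, ⟪e i,
          ((cfc (fun z : ℂ => g z.re) H - Polynomial.aeval H q) * (A * B)) (e i)⟫_ℂ)
        + ∑' i : ι, ⟪e i, ((Polynomial.aeval H q) * (A * B)) (e i)⟫_ℂ := by
      rw [ht, ← Summable.tsum_add (tSummable hA hB _) (tSummable hA hB _)]
      refine tsum_congr fun i => ?_
      rw [← inner_add_right, ← ContinuousLinearMap.add_apply, ← add_mul, sub_add_cancel]
    rw [hsplit, tPoly hP hA hB hAB q, add_zero]
    exact tBound hA hB hε hq
  have h0 : ‖t‖ ≤ 0 := by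
    have hK : (0:ℝ) < (cA + cB) / 2 + 1 := by linarith
    have hall : ∀ ε : ℝ, 0 < ε → ‖t‖ ≤ 0 + ε := by
      intro ε hε
      have hk := key (ε / ((cA + cB) / 2 + 1)) (by positivity)
      have h1 : ε / ((cA + cB) / 2 + 1) * ((cA + cB) / 2 + 1) = ε :=
        div_mul_cancel₀ ε hK.ne'
      have h2 : ε / ((cA + cB) / 2 + 1) * ((cA + cB) / 2)
          ≤ ε / ((cA + cB) / 2 + 1) * ((cA + cB) / 2 + 1) :=
        mul_le_mul_of_nonneg_left (by linarith) (by positivity)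
      have h3 : ε / ((cA + cB) / 2 + 1) * (cA + cB) / 2
          = ε / ((cA + cB) / 2 + 1) * ((cA + cB) / 2) := by ring
      rw [h3] at hk
      linarith
    exact le_of_forall_pos_le_add hall
  exact norm_le_zero_iff.mp h0

end TraceCommAux

set_option maxHeartbeats 1000000 in
/-- Let `W ⊆ ι`, `P := P_W`, `H` a bounded self-adjoint operator on `ℓ²(ι)`
such that `[P, H]` factors as a composition of two Hilbert–Schmidt operators, and `f` a
Schwartz function on `ℝ` with values in `ℂ`, with derivative `f'`. Then the diagonal matrix
entries of `[P, f(H)]` and of `f'(H)∘[P, H]` are both summable, with the same sum: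
`Tr([P, f(H)]) = Tr(f'(H)·[P, H])`. Here `g(H)` is the continuous functional calculus of
the self-adjoint operator `H` (applied through the real part of the spectral variable,
as the spectrum of `H` is real). -/
theorem trace_commutator_functional_calculus
    {ι : Type*} [DecidableEq ι] (W : Set ι)
    (H P A B : lp (fun _ : ι => ℂ) 2 →L[ℂ] lp (fun _ : ι => ℂ) 2)
    (hH : IsSelfAdjoint H)
    (hP : ∀ (x : lp (fun _ : ι => ℂ) 2) (i : ι), (P x) i = W.indicator (⇑x) i)
    (hA : Summable fun j : ι => ‖A (lp.single 2 j (1 : ℂ))‖ ^ 2)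
    (hB : Summable fun j : ι => ‖B (lp.single 2 j (1 : ℂ))‖ ^ 2)
    (hAB : P ∘L H - H ∘L P = A ∘L B)
    (f : SchwartzMap ℝ ℂ) :
    Summable
      (fun i : ι =>
        ⟪lp.single 2 i (1 : ℂ),
          (P ∘L cfc (fun z : ℂ => f z.re) H - cfc (fun z : ℂ => f z.re) H ∘L P)
            (lp.single 2 i (1 : ℂ))⟫_ℂ) ∧
    Summable
      (fun i : ι =>
        ⟪lp.single 2 i (1 : ℂ),
          (cfc (fun z : ℂ => deriv (⇑f) z.re) H ∘L (P ∘L H - H ∘L P))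
            (lp.single 2 i (1 : ℂ))⟫_ℂ) ∧
    (∑' i : ι,
        ⟪lp.single 2 i (1 : ℂ),
          (P ∘L cfc (fun z : ℂ => f z.re) H - cfc (fun z : ℂ => f z.re) H ∘L P)
            (lp.single 2 i (1 : ℂ))⟫_ℂ)
      = ∑' i : ι,
          ⟪lp.single 2 i (1 : ℂ),
            (cfc (fun z : ℂ => deriv (⇑f) z.re) H ∘L (P ∘L H - H ∘L P))
              (lp.single 2 i (1 : ℂ))⟫_ℂ := by
  classical
  have hA' : TraceCommAux.HS A := hA
  have hB' : TraceCommAux.HS B := hB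
  have hABm : P * H - H * P = A * B := hAB
  have hderiv : Continuous (deriv (⇑f)) := (f.smooth ⊤).continuous_deriv (by norm_num)
  have hzero : ∀ i : ι,
      ⟪lp.single 2 i (1 : ℂ),
        (P ∘L cfc (fun z : ℂ => f z.re) H - cfc (fun z : ℂ => f z.re) H ∘L P)
          (lp.single 2 i (1 : ℂ))⟫_ℂ = 0 := fun i =>
    TraceCommAux.diag_commutator_eq_zero P (cfc (fun z : ℂ => f z.re) H) W hP i
  have hsum1 : Summable
      (fun i : ι =>
        ⟪lp.single 2 i (1 : ℂ),
          (P ∘L cfc (fun z : ℂ => f z.re) H - cfc (fun z : ℂ => f z.re) H ∘L P)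
            (lp.single 2 i (1 : ℂ))⟫_ℂ) :=
    summable_zero.congr fun i => (hzero i).symm
  have hsum2 : Summable
      (fun i : ι =>
        ⟪lp.single 2 i (1 : ℂ),
          (cfc (fun z : ℂ => deriv (⇑f) z.re) H ∘L (P ∘L H - H ∘L P))
            (lp.single 2 i (1 : ℂ))⟫_ℂ) := by
    rw [hAB]
    exact TraceCommAux.tSummable hA' hB' (cfc (fun z : ℂ => deriv (⇑f) z.re) H)
  refine ⟨hsum1, hsum2, ?_⟩
  have hL : (∑' i : ι,
      ⟪lp.single 2 i (1 : ℂ),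
        (P ∘L cfc (fun z : ℂ => f z.re) H - cfc (fun z : ℂ => f z.re) H ∘L P)
          (lp.single 2 i (1 : ℂ))⟫_ℂ) = 0 := by
    rw [tsum_congr hzero]
    exact tsum_zero
  have hR : (∑' i : ι,
      ⟪lp.single 2 i (1 : ℂ),
        (cfc (fun z : ℂ => deriv (⇑f) z.re) H ∘L (P ∘L H - H ∘L P))
          (lp.single 2 i (1 : ℂ))⟫_ℂ) = 0 := by
    rw [hAB]
    exact TraceCommAux.trace_cfc_zero hH hP hA' hB' hABm (deriv (⇑f)) hderiv
  rw [hL, hR]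
end

section
/- Let A be a unital complex C*-algebra, a ∈ A self-adjoint, b ∈ A, and f : ℝ → ℂ a Schwartz function with derivative f'. Then [b, f(a)] = ∫_ℝ ∫₀¹ 𝓕(f')(ξ) · exp(2πiξ(1−t)·a) · (b·a − a·b) · exp(2πiξt·a) dt dξ, where the integrals are Bochner integrals in A and f(a) denotes the continuous functional calculus of a applied to f. -/
open FourierTransform MeasureTheory
open scoped Real

section Aux

open Complex NormedSpace

private lemma hasDerivAt_comp_ofReal'' {E : Type*} [NormedAddCommGroup E] [NormedSpace ℂ E]
    {e : ℂ → E} {e' : E} {z : ℝ} (hf : HasDerivAt e e' z) :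
    HasDerivAt (fun y : ℝ => e y) e' z := by
  simpa only [Function.comp_def, Complex.ofRealCLM_apply, Complex.ofReal_one, one_smul] using
    (hf.scomp z Complex.ofRealCLM.hasDerivAt)

private lemma duhamel' {A : Type*} [CStarAlgebra A] (a b : A) (c : ℝ) :
    b * exp (((c : ℝ) * Complex.I) • a) - exp (((c : ℝ) * Complex.I) • a) * b
      = ∫ t in (0:ℝ)..1, ((c : ℝ) * Complex.I) •
          (exp (((c * (1 - t) : ℝ) * Complex.I) • a) * (b * a - a * b)
            * exp (((c * t : ℝ) * Complex.I) • a)) := by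
  set u : ℂ := (c : ℝ) * Complex.I with hu
  set x : A := u • a with hx
  have hexpL : ∀ t : ℝ, exp (((c * (1 - t) : ℝ) * Complex.I) • a)
      = exp ((1 - (t:ℂ)) • x) := by
    intro t
    rw [hx, smul_smul]
    congr 1
    push_cast [hu]
    ring_nf
  have hexpR : ∀ t : ℝ, exp (((c * t : ℝ) * Complex.I) • a)
      = exp ((t:ℂ) • x) := by
    intro t
    rw [hx, smul_smul]
    congr 1
    push_cast [hu]
    ring_nf
  have hcomm : ∀ s : ℂ, exp (s • x) * x = x * exp (s • x) := fun s =>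
    (((Commute.refl x).smul_left s).exp_left).eq
  set G : ℝ → A := fun t => exp ((1 - (t:ℂ)) • x) * b * exp ((t:ℂ) • x) with hG
  have hderiv : ∀ t : ℝ, HasDerivAt G
      (u • (exp ((1 - (t:ℂ)) • x) * (b * a - a * b) * exp ((t:ℂ) • x))) t := by
    intro t
    have h1 : HasDerivAt (fun s : ℂ => exp ((1 - s) • x))
        ((-1 : ℂ) • (exp ((1 - (t:ℂ)) • x) * x)) (t:ℂ) := by
      have hinner : HasDerivAt (fun s : ℂ => 1 - s) (-1 : ℂ) (t:ℂ) :=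
        (hasDerivAt_id _).const_sub 1
      exact (hasDerivAt_exp_smul_const x ((1:ℂ) - (t:ℂ))).scomp (t:ℂ) hinner
    have h1r : HasDerivAt (fun t : ℝ => exp ((1 - (t:ℂ)) • x))
        ((-1 : ℂ) • (exp ((1 - (t:ℂ)) • x) * x)) t := hasDerivAt_comp_ofReal'' h1
    have h2 : HasDerivAt (fun s : ℂ => exp (s • x)) (exp ((t:ℂ) • x) * x) (t:ℂ) :=
      hasDerivAt_exp_smul_const x (t:ℂ)
    have h2r : HasDerivAt (fun t : ℝ => exp ((t:ℂ) • x)) (exp ((t:ℂ) • x) * x) t :=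
      hasDerivAt_comp_ofReal'' h2
    have h3 := ((h1r.mul_const b).mul h2r)
    convert h3 using 1
    · rfl
    set eL := exp ((1 - (t:ℂ)) • x)
    set eR := exp ((t:ℂ) • x)
    have hbx : b * x - x * b = u • (b * a - a * b) := by
      rw [hx, mul_smul_comm, smul_mul_assoc, smul_sub]
    have hcomm' : eR * x = x * eR := hcomm (t:ℂ)
    rw [hcomm']
    simp only [neg_smul, one_smul]
    calc u • (eL * (b * a - a * b) * eR)
        = eL * (u • (b * a - a * b)) * eR := by
          simp only [mul_smul_comm, smul_mul_assoc]
      _ = eL * (b * x - x * b) * eR := by rw [← hbx]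
      _ = -(eL * x) * b * eR + eL * b * (x * eR) := by noncomm_ring
  have hcont : Continuous (fun t : ℝ =>
      u • (exp ((1 - (t:ℂ)) • x) * (b * a - a * b) * exp ((t:ℂ) • x))) := by
    apply Continuous.const_smul
    apply Continuous.mul
    apply Continuous.mul
    · exact (letI : NormedAlgebra ℚ A := NormedAlgebra.restrictScalars ℚ ℂ A; exp_continuous).comp (by fun_prop)
    · exact continuous_const
    · exact (letI : NormedAlgebra ℚ A := NormedAlgebra.restrictScalars ℚ ℂ A; exp_continuous).comp (by fun_prop)
  have key := intervalIntegral.integral_eq_sub_of_hasDerivAt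
    (f := G) (f' := fun t => u • (exp ((1 - (t:ℂ)) • x) * (b * a - a * b) * exp ((t:ℂ) • x)))
    (fun t _ => hderiv t) (hcont.intervalIntegrable 0 1)
  have hG1 : G 1 = b * exp x := by
    simp [hG, sub_self]
  have hG0 : G 0 = exp x * b := by
    simp [hG]
  calc b * exp x - exp x * b = G 1 - G 0 := by rw [hG1, hG0]
    _ = ∫ t in (0:ℝ)..1, u • (exp ((1 - (t:ℂ)) • x) * (b * a - a * b)
            * exp ((t:ℂ) • x)) := key.symm
    _ = _ := by
        apply intervalIntegral.integral_congr
        intro t _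
        simp only [hexpL, hexpR]

private lemma norm_exp_smul_I' {A : Type*} [CStarAlgebra A] [Nontrivial A] (a : A)
    (ha : IsSelfAdjoint a) (c : ℝ) :
    ‖exp (((c : ℝ) * Complex.I) • a)‖ = 1 := by
  have hmem : (((c : ℝ) : ℂ) * Complex.I) • a ∈ skewAdjoint A := by
    rw [skewAdjoint.mem_iff, star_smul, ha.star_eq]
    rw [star_mul', Complex.star_def, Complex.conj_I, Complex.conj_ofReal, mul_neg, neg_smul]
  letI : NormedAlgebra ℚ A := NormedAlgebra.restrictScalars ℚ ℂ A
  exact CStarRing.norm_of_mem_unitary (exp_mem_unitary_of_mem_skewAdjoint hmem)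

private lemma cfc_eq_integral' {A : Type*} [CStarAlgebra A] (a : A) (ha : IsSelfAdjoint a)
    (f : SchwartzMap ℝ ℂ) :
    cfc (fun z : ℂ => f z.re) a
      = ∫ ξ : ℝ, 𝓕 ⇑f ξ • NormedSpace.exp (((2 * π * ξ : ℝ) * Complex.I) • a) := by
  have hN : IsStarNormal a := ha.isStarNormal
  let Em : C(ℝ × spectrum ℂ a, ℂ) :=
    ⟨fun p => Complex.exp (((2 * π * p.1 : ℝ) : ℂ) * Complex.I * (p.2 : ℂ)), by fun_prop⟩
  let E : ℝ → C(spectrum ℂ a, ℂ) := fun ξ => Em.curry ξ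
  have hEcont : Continuous E := Em.curry.continuous
  have hEval : ∀ ξ (x : spectrum ℂ a),
      E ξ x = Complex.exp (((2 * π * ξ : ℝ) : ℂ) * Complex.I * (x : ℂ)) := fun _ _ => rfl
  have hEvalNorm : ∀ ξ (x : spectrum ℂ a), ‖E ξ x‖ = 1 := by
    intro ξ x
    rw [hEval]
    obtain ⟨r, hr⟩ : ∃ r : ℝ, (x : ℂ) = (r : ℂ) := ⟨_, ha.mem_spectrum_eq_re x.2⟩
    have : ((2 * π * ξ : ℝ) : ℂ) * Complex.I * (x : ℂ)
        = ((2 * π * ξ * r : ℝ) : ℂ) * Complex.I := by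
      rw [hr]; push_cast; ring
    rw [this, Complex.norm_exp_ofReal_mul_I]
  have hFc : Continuous (𝓕 ⇑f) := by
    rw [← SchwartzMap.fourier_coe]
    exact (𝓕 f).continuous
  have hFf : Integrable (𝓕 ⇑f) := by
    rw [← SchwartzMap.fourier_coe]
    exact (𝓕 f).integrable
  have hFint : Integrable (fun ξ => 𝓕 ⇑f ξ • E ξ) := by
    refine hFf.norm.mono' ((hFc.smul hEcont).aestronglyMeasurable) ?_
    refine Filter.Eventually.of_forall fun ξ => ?_
    refine (ContinuousMap.norm_le _ (norm_nonneg _)).mpr fun x => ?_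
    calc ‖(𝓕 ⇑f ξ • E ξ) x‖ = ‖𝓕 ⇑f ξ‖ * ‖E ξ x‖ := by
          rw [ContinuousMap.smul_apply, norm_smul]
      _ = ‖𝓕 ⇑f ξ‖ := by rw [hEvalNorm, mul_one]
      _ ≤ ‖𝓕 ⇑f ξ‖ := le_refl _
  let Φ : C(spectrum ℂ a, ℂ) →L[ℂ] A :=
    { (cfcHom hN : C(spectrum ℂ a, ℂ) →⋆ₐ[ℂ] A).toAlgHom.toLinearMap with
      cont := cfcHom_continuous hN }
  have hΦ : ∀ g : C(spectrum ℂ a, ℂ), Φ g = cfcHom hN g := fun _ => rfl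
  have hΦE : ∀ ξ : ℝ, Φ (E ξ) = NormedSpace.exp (((2 * π * ξ : ℝ) * Complex.I) • a) := by
    intro ξ
    have hsn : IsStarNormal ((((2 * π * ξ : ℝ) : ℂ) * Complex.I) • a) := by
      constructor
      rw [star_smul, ha.star_eq]
      exact ((Commute.refl a).smul_left _).smul_right _
    have hcont : ContinuousOn (fun z : ℂ =>
        Complex.exp (((2 * π * ξ : ℝ) : ℂ) * Complex.I * z)) (spectrum ℂ a) := by fun_prop
    have h1 : cfc (fun z : ℂ => Complex.exp (((2 * π * ξ : ℝ) : ℂ) * Complex.I * z)) a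
        = cfcHom hN (E ξ) := by
      rw [cfc_apply _ a hN hcont]
      congr 1
    have h2 : cfc (fun z : ℂ => Complex.exp (((2 * π * ξ : ℝ) : ℂ) * Complex.I * z)) a
        = cfc Complex.exp ((((2 * π * ξ : ℝ) : ℂ) * Complex.I) • a) :=
      cfc_comp_const_mul (((2 * π * ξ : ℝ) : ℂ) * Complex.I) Complex.exp a (by fun_prop) hN
    have h3 : cfc Complex.exp ((((2 * π * ξ : ℝ) : ℂ) * Complex.I) • a)
        = NormedSpace.exp ((((2 * π * ξ : ℝ) : ℂ) * Complex.I) • a) :=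
      CFC.complex_exp_eq_normedSpace_exp hsn
    rw [hΦ, ← h1, h2, h3]
  have hg : ContinuousOn (fun z : ℂ => (f z.re : ℂ)) (spectrum ℂ a) := by fun_prop
  rw [cfc_apply _ a hN hg]
  have hCM : (⟨_, hg.restrict⟩ : C(spectrum ℂ a, ℂ)) = ∫ ξ, 𝓕 ⇑f ξ • E ξ := by
    symm
    ext x
    have hev := (ContinuousMap.evalCLM ℂ x).integral_comp_comm hFint
    have hevs : (∫ ξ, 𝓕 ⇑f ξ • E ξ) x = ∫ ξ, 𝓕 ⇑f ξ • E ξ x := by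
      have h1 : (∫ ξ, 𝓕 ⇑f ξ • E ξ) x
          = (ContinuousMap.evalCLM ℂ x) (∫ ξ, 𝓕 ⇑f ξ • E ξ) := rfl
      rw [h1, ← hev]
      rfl
    obtain ⟨r, hr⟩ : ∃ r : ℝ, (x : ℂ) = (r : ℂ) := ⟨_, ha.mem_spectrum_eq_re x.2⟩
    have hre : ((x : ℂ)).re = r := by rw [hr]; simp
    calc (∫ ξ, 𝓕 ⇑f ξ • E ξ) x
        = ∫ ξ, 𝓕 ⇑f ξ • E ξ x := hevs
      _ = ∫ ξ, Complex.exp (((-2 * π * ξ * (-r) : ℝ) : ℂ) * Complex.I) • 𝓕 ⇑f ξ := by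
          refine integral_congr_ae (Filter.Eventually.of_forall fun ξ => ?_)
          dsimp only
          rw [hEval, smul_eq_mul, smul_eq_mul, mul_comm]
          congr 2
          rw [hr]; push_cast; ring
      _ = 𝓕 (𝓕 ⇑f) (-r) := (Real.fourier_real_eq_integral_exp_smul _ _).symm
      _ = 𝓕⁻ (𝓕 ⇑f) r := (Real.fourierInv_eq_fourier_neg _ _).symm
      _ = f r := by rw [f.continuous.fourierInv_fourier_eq f.integrable hFf]
      _ = (⟨_, hg.restrict⟩ : C(spectrum ℂ a, ℂ)) x := by
          show (f r : ℂ) = f ((x : ℂ)).re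
          rw [hre]
  rw [show cfcHom hN (⟨_, hg.restrict⟩ : C(spectrum ℂ a, ℂ)) = Φ ⟨_, hg.restrict⟩ from rfl,
    hCM, ← Φ.integral_comp_comm hFint]
  refine integral_congr_ae (Filter.Eventually.of_forall fun ξ => ?_)
  dsimp only
  rw [_root_.map_smul, hΦE ξ]

end Aux


/-- In a unital complex C*-algebra `A`, for `a ∈ A` self-adjoint, `b ∈ A` and
a Schwartz function `f : ℝ → ℂ` with derivative `f'`, one has
`[b, f(a)] = ∫_ℝ ∫₀¹ 𝓕(f')(ξ) • exp(2πiξ(1-t)a) (ba - ab) exp(2πiξt a) dt dξ`,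
where `f(a)` is the continuous functional calculus of `a` applied to `f` (through the real
part of the spectral variable, since the spectrum of `a` is real). -/
theorem commutator_cfc_integral_formula
    {A : Type*} [CStarAlgebra A]
    (a b : A) (ha : IsSelfAdjoint a) (f : SchwartzMap ℝ ℂ) :
    b * cfc (fun z : ℂ => f z.re) a - cfc (fun z : ℂ => f z.re) a * b
      = ∫ ξ : ℝ, ∫ t in (0:ℝ)..1,
          𝓕 (deriv (⇑f)) ξ •
            (NormedSpace.exp (((2 * π * ξ * (1 - t) : ℝ) * Complex.I) • a)
              * (b * a - a * b)
              * NormedSpace.exp (((2 * π * ξ * t : ℝ) * Complex.I) • a)) := by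
  rcases subsingleton_or_nontrivial A with hA | hA
  · exact Subsingleton.elim _ _
  have hFc : Continuous (𝓕 ⇑f) := by
    rw [← SchwartzMap.fourier_coe]
    exact (𝓕 f).continuous
  have hFf : Integrable (𝓕 ⇑f) := by
    rw [← SchwartzMap.fourier_coe]
    exact (𝓕 f).integrable
  set G : ℝ → A := fun ξ =>
    𝓕 ⇑f ξ • NormedSpace.exp (((2 * π * ξ : ℝ) * Complex.I) • a) with hGdef
  have hGc : Continuous G := by
    apply hFc.smul
    exact (letI : NormedAlgebra ℚ A := NormedAlgebra.restrictScalars ℚ ℂ A; NormedSpace.exp_continuous).comp (by fun_prop)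
  have hGint : Integrable G := by
    refine hFf.norm.mono' hGc.aestronglyMeasurable ?_
    refine Filter.Eventually.of_forall fun ξ => ?_
    rw [hGdef]
    calc ‖𝓕 ⇑f ξ • NormedSpace.exp (((2 * π * ξ : ℝ) * Complex.I) • a)‖
        = ‖𝓕 ⇑f ξ‖ * ‖NormedSpace.exp (((2 * π * ξ : ℝ) * Complex.I) • a)‖ := norm_smul _ _
      _ = ‖𝓕 ⇑f ξ‖ := by rw [norm_exp_smul_I' a ha, mul_one]
      _ ≤ ‖𝓕 ⇑f ξ‖ := le_refl _
  rw [cfc_eq_integral' a ha f]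
  have hL : Integrable (fun ξ => b * G ξ) :=
    (ContinuousLinearMap.mul ℂ A b).integrable_comp hGint
  have hR : Integrable (fun ξ => G ξ * b) :=
    ((ContinuousLinearMap.mul ℂ A).flip b).integrable_comp hGint
  have h1 : b * (∫ ξ, G ξ) = ∫ ξ, b * G ξ :=
    ((ContinuousLinearMap.mul ℂ A b).integral_comp_comm hGint).symm
  have h2 : (∫ ξ, G ξ) * b = ∫ ξ, G ξ * b :=
    (((ContinuousLinearMap.mul ℂ A).flip b).integral_comp_comm hGint).symm
  rw [h1, h2, ← integral_sub hL hR]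
  refine integral_congr_ae (Filter.Eventually.of_forall fun ξ => ?_)
  dsimp only
  rw [hGdef]
  have hderint : Integrable (deriv ⇑f) := by
    have h := (SchwartzMap.derivCLM ℝ ℂ f).integrable (μ := volume)
    have heq : ⇑(SchwartzMap.derivCLM ℝ ℂ f) = deriv ⇑f :=
      funext fun x => SchwartzMap.derivCLM_apply ℝ f x
    rwa [heq] at h
  have hFd : 𝓕 (deriv ⇑f) = fun x : ℝ => (2 * π * Complex.I * x) • 𝓕 ⇑f x :=
    Real.fourier_deriv f.integrable f.differentiable hderint
  rw [mul_smul_comm, smul_mul_assoc, ← smul_sub, duhamel' a b (2 * π * ξ),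
    intervalIntegral.integral_smul, smul_smul]
  rw [show (𝓕 ⇑f ξ * (((2 * π * ξ : ℝ) : ℂ) * Complex.I)) = 𝓕 (deriv ⇑f) ξ by
    rw [hFd]; dsimp only; rw [smul_eq_mul]; push_cast; ring]
  rw [← intervalIntegral.integral_smul]
end

section
/- Let A be a unital complex C*-algebra, a ∈ A self-adjoint, and f : ℝ → ℂ a Schwartz function. Then the map ξ ↦ 𝓕f(ξ) · exp(2πiξ·a) is Bochner integrable on ℝ and f(a) = ∫_ℝ 𝓕f(ξ) · exp(2πiξ·a) dξ, where f(a) denotes the continuous functional calculus of a applied to f. -/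
open FourierTransform MeasureTheory
open scoped Real

lemma aux_isStarNormal_smul {A : Type*} [CStarAlgebra A] {a : A} (ha : IsSelfAdjoint a)
    (c : ℂ) : IsStarNormal (c • a) := by
  constructor
  rw [Commute, SemiconjBy, star_smul, ha.star_eq, smul_mul_assoc, smul_mul_assoc,
    mul_smul_comm, mul_smul_comm, smul_comm]

lemma aux_exp_eq_cfc {A : Type*} [CStarAlgebra A] {a : A} (ha : IsSelfAdjoint a) (c : ℂ) :
    NormedSpace.exp (c • a) = cfc (fun z : ℂ => Complex.exp (c * z)) a := by
  have hn : IsStarNormal (c • a) := aux_isStarNormal_smul ha c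
  have := CFC.complex_exp_eq_normedSpace_exp (a := c • a) hn
  rw [← this, ← cfc_comp_const_mul c Complex.exp a]

/-- In a unital complex C*-algebra `A`, for `a ∈ A` self-adjoint and a Schwartz
function `f : ℝ → ℂ`, the map `ξ ↦ 𝓕f(ξ) • exp(2πiξ a)` is Bochner integrable on `ℝ` and
`f(a) = ∫_ℝ 𝓕f(ξ) • exp(2πiξ a) dξ`, where `f(a)` is the continuous functional calculus of
`a` applied to `f` (through the real part of the spectral variable, since the spectrum of
`a` is real). -/
theorem cfc_fourier_inversion_formula
    {A : Type*} [CStarAlgebra A] (a : A) (ha : IsSelfAdjoint a) (f : SchwartzMap ℝ ℂ) :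
    Integrable
      (fun ξ : ℝ => 𝓕 (⇑f) ξ • NormedSpace.exp (((2 * π * ξ : ℝ) * Complex.I) • a)) ∧
    cfc (fun z : ℂ => f z.re) a
      = ∫ ξ : ℝ, 𝓕 (⇑f) ξ • NormedSpace.exp (((2 * π * ξ : ℝ) * Complex.I) • a) := by
  have hFa : ⇑(SchwartzMap.fourierTransformCLE ℂ (SchwartzMap ℝ ℂ) f) = 𝓕 ⇑f :=
    rfl
  have hFint : Integrable (𝓕 ⇑f) := hFa ▸ (SchwartzMap.fourierTransformCLE ℂ (SchwartzMap ℝ ℂ) f).integrable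
  have hFcont : Continuous (𝓕 ⇑f) := hFa ▸ (SchwartzMap.fourierTransformCLE ℂ (SchwartzMap ℝ ℂ) f).continuous
  have hn : IsStarNormal a := ha.isStarNormal
  -- norm of the exponential is ≤ 1
  have him : ∀ z ∈ spectrum ℂ a, z.im = 0 := fun z hz => ha.im_eq_zero_of_mem_spectrum hz
  have hexp1 : ∀ (ξ : ℝ) (z : ℂ), z.im = 0 →
      ‖Complex.exp ((((2 * π * ξ : ℝ) : ℂ) * Complex.I) * z)‖ = 1 := by
    intro ξ z hz
    rw [Complex.norm_exp]
    have : ((((2 * π * ξ : ℝ) : ℂ) * Complex.I) * z).re = 0 := by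
      simp [Complex.mul_re, Complex.mul_im, hz]
    rw [this, Real.exp_zero]
  have hnorm : ∀ ξ : ℝ,
      ‖NormedSpace.exp (((2 * π * ξ : ℝ) * Complex.I) • a)‖ ≤ 1 := by
    intro ξ
    rw [aux_exp_eq_cfc ha]
    exact norm_cfc_le zero_le_one fun z hz => le_of_eq (hexp1 ξ z (him z hz))
  have hint : Integrable
      (fun ξ : ℝ => 𝓕 (⇑f) ξ • NormedSpace.exp (((2 * π * ξ : ℝ) * Complex.I) • a)) := by
    refine hFint.norm.mono' ?_ ?_
    · let _ : NormedAlgebra ℚ A := .restrictScalars ℚ ℂ A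
      exact (hFcont.smul (NormedSpace.exp_continuous.comp (by fun_prop))).aestronglyMeasurable
    · filter_upwards with ξ
      rw [norm_smul]
      exact mul_le_of_le_one_right (norm_nonneg _) (hnorm ξ)
  refine ⟨hint, ?_⟩
  -- pointwise: each term is a cfc
  have hterm : ∀ ξ : ℝ,
      𝓕 (⇑f) ξ • NormedSpace.exp (((2 * π * ξ : ℝ) * Complex.I) • a)
        = cfc (fun z : ℂ => 𝓕 (⇑f) ξ * Complex.exp ((((2 * π * ξ : ℝ) : ℂ) * Complex.I) * z)) a := by
    intro ξ
    rw [aux_exp_eq_cfc ha,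
      ← cfc_const_mul (𝓕 (⇑f) ξ)
        (fun z : ℂ => Complex.exp ((((2 * π * ξ : ℝ) : ℂ) * Complex.I) * z)) a
        (Continuous.continuousOn (by fun_prop))]
  simp only [hterm]
  rw [← cfc_integral (fun (ξ : ℝ) (z : ℂ) =>
      𝓕 (⇑f) ξ * Complex.exp ((((2 * π * ξ : ℝ) : ℂ) * Complex.I) * z))
      (fun ξ => ‖𝓕 (⇑f) ξ‖) a ?_ ?_ hFint.norm.hasFiniteIntegral hn]
  · apply cfc_congr
    intro z hz
    beta_reduce
    have hz' : z = (z.re : ℂ) := Complex.ext rfl (him z hz)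
    have hinv := (f.integrable).fourierInv_fourier_eq hFint (f.continuous.continuousAt (x := z.re))
    rw [Real.fourierInv_eq'] at hinv
    rw [← hinv]
    refine integral_congr_ae (Filter.Eventually.of_forall fun ξ => ?_)
    beta_reduce
    rw [smul_eq_mul, mul_comm]
    congr 2
    rw [hz']
    simp only [RCLike.inner_apply, conj_trivial, Complex.ofReal_re]
    push_cast [Complex.ofReal_re]
    ring
  · show ContinuousOn (fun p : ℝ × ℂ =>
      𝓕 (⇑f) p.1 * Complex.exp ((((2 * π * p.1 : ℝ) : ℂ) * Complex.I) * p.2)) _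
    exact Continuous.continuousOn (by fun_prop)
  · refine Filter.Eventually.of_forall fun ξ z hz => ?_
    rw [norm_mul, hexp1 ξ z (him z hz), mul_one]
end
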